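/- If σ is a 3-fold twist (screw motion with rotational component of order 3) preserving the cubic tessellation of ℝ³, then its axis has direction parallel to (1,1,1) up to the action of the point group, and the norm of its translational component lies in (√3/3)·ℤ. Moreover, if the axis of σ contains a vertex of ℤ³ then the norm lies in √3·ℤ. -/

import Mathlib

noncomputable section
open scoped RealInnerProductSpace

abbrev E3 : Type := EuclideanSpace ℝ (Fin 3)

def vec (x y z : ℝ) : E3 := (WithLp.equiv 2 (Fin 3 → ℝ)).symm ![x, y, z]

/-- The vertex set of the cubic tessellation: the integer lattice ℤ³. -/
def latt : Set E3 := {p | ∀ i, ∃ n : ℤ, p i = (n : ℝ)}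

/-- An isometry belongs to the symmetry group [4,3,4] of the cubic tessellation
iff it preserves the integer lattice. -/
def PreservesLatt (f : E3 ≃ᵢ E3) : Prop := ∀ p : E3, p ∈ latt ↔ f p ∈ latt

/-- `f` is a rotation of order `n` about the line through `p` with direction `v`:
it fixes the line pointwise and has order `n` in the isometry group. -/
def IsRotationAbout (f : E3 ≃ᵢ E3) (p v : E3) (n : ℕ) : Prop :=
  v ≠ 0 ∧ (∀ t : ℝ, f (p + t • v) = p + t • v) ∧ orderOf f = n

/-- `f` is a twist (screw motion): the commuting product of a rotation `r` of order `n ≥ 2`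
about the line through `p` in direction `v` with the translation by `w ≠ 0`, `w` parallel to `v`. -/
def IsTwist (f : E3 ≃ᵢ E3) (p v w : E3) (n : ℕ) : Prop :=
  2 ≤ n ∧ w ≠ 0 ∧ (∃ s : ℝ, w = s • v) ∧
  ∃ r : E3 ≃ᵢ E3, IsRotationAbout r p v n ∧ (∀ x, f x = r x + w) ∧ (∀ x, r (x + w) = r x + w)

/- ---------------- auxiliary lemmas ---------------- -/

lemma latt_sub {a b : E3} (ha : a ∈ latt) (hb : b ∈ latt) : a - b ∈ latt := by
  intro i
  obtain ⟨n, hn⟩ := ha i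
  obtain ⟨m, hm⟩ := hb i
  exact ⟨n - m, by push_cast; rw [PiLp.sub_apply, hn, hm]⟩

lemma zero_mem_latt : (0 : E3) ∈ latt := fun i => ⟨0, by simp⟩

lemma sq3_int (a b c : ℤ) (h : a^2 + b^2 + c^2 = 1) :
    (a = 0 ∧ b = 0 ∧ (c = 1 ∨ c = -1)) ∨ (a = 0 ∧ c = 0 ∧ (b = 1 ∨ b = -1)) ∨
    (b = 0 ∧ c = 0 ∧ (a = 1 ∨ a = -1)) := by
  have ha1 : -1 ≤ a := by nlinarith [sq_nonneg b, sq_nonneg c, sq_nonneg (a+1)]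
  have ha2 : a ≤ 1 := by nlinarith [sq_nonneg b, sq_nonneg c, sq_nonneg (a-1)]
  have hb1 : -1 ≤ b := by nlinarith [sq_nonneg a, sq_nonneg c, sq_nonneg (b+1)]
  have hb2 : b ≤ 1 := by nlinarith [sq_nonneg a, sq_nonneg c, sq_nonneg (b-1)]
  have hc1 : -1 ≤ c := by nlinarith [sq_nonneg b, sq_nonneg a, sq_nonneg (c+1)]
  have hc2 : c ≤ 1 := by nlinarith [sq_nonneg b, sq_nonneg a, sq_nonneg (c-1)]
  interval_cases a <;> interval_cases b <;> interval_cases c <;> simp_all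

lemma perm3 : ∀ σ : Fin 3 → Fin 3, (∀ i, σ (σ (σ i)) = i) → (¬ ∀ i, σ i = i) →
    (σ 0 = 1 ∧ σ 1 = 2 ∧ σ 2 = 0) ∨ (σ 0 = 2 ∧ σ 1 = 0 ∧ σ 2 = 1) := by decide

def signIso (d : Fin 3 → ℝ) (hd : ∀ i, d i = 1 ∨ d i = -1) : E3 ≃ᵢ E3 where
  toFun x := WithLp.toLp 2 (fun i => d i * x i)
  invFun x := WithLp.toLp 2 (fun i => d i * x i)
  left_inv x := PiLp.ext fun i => by
    show d i * (d i * x i) = x i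
    rcases hd i with h | h <;> rw [h] <;> ring
  right_inv x := PiLp.ext fun i => by
    show d i * (d i * x i) = x i
    rcases hd i with h | h <;> rw [h] <;> ring
  isometry_toFun := by
    refine Isometry.of_dist_eq fun x y => ?_
    rw [EuclideanSpace.dist_eq, EuclideanSpace.dist_eq]
    congr 1
    refine Finset.sum_congr rfl fun i _ => ?_
    show dist (d i * x i) (d i * y i) ^ 2 = _
    rw [Real.dist_eq, Real.dist_eq, show d i * x i - d i * y i = d i * (x i - y i) by ring,
      abs_mul]
    rcases hd i with h | h <;> rw [h] <;> simp

lemma signIso_apply (d : Fin 3 → ℝ) (hd) (x : E3) (i : Fin 3) :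
    signIso d hd x i = d i * x i := rfl

lemma signIso_latt (d : Fin 3 → ℝ) (hd : ∀ i, d i = 1 ∨ d i = -1) :
    PreservesLatt (signIso d hd) := by
  intro p
  constructor
  · intro hp i
    obtain ⟨n, hn⟩ := hp i
    rcases hd i with h | h
    · exact ⟨n, by rw [signIso_apply, h, one_mul, hn]⟩
    · exact ⟨-n, by rw [signIso_apply, h, hn]; push_cast; ring⟩
  · intro hp i
    obtain ⟨n, hn⟩ := hp i
    rw [signIso_apply] at hn
    rcases hd i with h | h
    · exact ⟨n, by rw [h, one_mul] at hn; exact hn⟩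
    · exact ⟨-n, by rw [h] at hn; push_cast; linarith⟩

lemma signIso_zero (d : Fin 3 → ℝ) (hd) : signIso d hd 0 = 0 := by
  ext i
  rw [signIso_apply]
  simp

lemma decomp (x : E3) : x = x 0 • EuclideanSpace.single 0 1 + x 1 • EuclideanSpace.single 1 1
    + x 2 • EuclideanSpace.single 2 1 := by
  ext k
  fin_cases k <;> simp [EuclideanSpace.single_apply]

lemma single_mem_latt (i : Fin 3) : EuclideanSpace.single i (1:ℝ) ∈ latt := by
  intro j
  refine ⟨if j = i then 1 else 0, ?_⟩
  rw [EuclideanSpace.single_apply]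
  split <;> simp

/-- A 3-fold twist preserving the cubic tessellation has axis direction parallel to
`(1,1,1)` up to the point group, and the norm of its translational component lies in
`(√3/3)·ℤ`; if moreover the axis contains a vertex of ℤ³, the norm lies in `√3·ℤ`. -/
theorem stmt2 (f : E3 ≃ᵢ E3) (p v w : E3)
    (hl : PreservesLatt f) (ht : IsTwist f p v w 3) :
    (∃ g : E3 ≃ᵢ E3, PreservesLatt g ∧ g 0 = 0 ∧ ∃ s : ℝ, s ≠ 0 ∧ g v = s • vec 1 1 1) ∧
    (∃ k : ℤ, ‖w‖ = k * (Real.sqrt 3 / 3)) ∧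
    ((∃ q ∈ latt, ∃ t : ℝ, q = p + t • v) → ∃ k : ℤ, ‖w‖ = k * Real.sqrt 3) := by
  obtain ⟨-, hw0, ⟨s, hws⟩, r, ⟨hv0, hax, hord⟩, hfr, hcomm⟩ := ht
  -- basic facts about r
  have rp : r p = p := by simpa using hax 0
  have r3 : ∀ x, r (r (r x)) = x := by
    have h1 : r ^ 3 = 1 := by have := pow_orderOf_eq_one r; rwa [hord] at this
    intro x
    have h2 : (r ^ 3) x = (1 : E3 ≃ᵢ E3) x := by rw [h1]
    simpa [pow_succ, IsometryEquiv.mul_apply] using h2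
  -- the linear part
  set T := r.toRealLinearIsometryEquiv with hTdef
  have hT : ∀ x, T x = r x - r 0 := fun x => r.toRealLinearIsometryEquiv_apply x
  have hr' : ∀ y, r y = T y + r 0 := fun y => by rw [hT]; abel
  have hTv : T v = v := by
    have hpv : r (p + v) = p + v := by simpa using hax 1
    have h1 : T (p + v) - T p = v := by rw [hT, hT, rp, hpv]; abel
    rw [map_add] at h1
    simpa using h1
  have key : ∀ x, T (T (T x)) + (T (T (r 0)) + T (r 0) + r 0) = x := by
    intro x
    have e1 : r (r (r x)) = T (T (T x)) + (T (T (r 0)) + T (r 0) + r 0) := by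
      rw [hr' x, hr' (T x + r 0), hr' (T (T x + r 0) + r 0)]
      simp only [map_add]
      abel
    rw [← e1, r3 x]
  have hC : T (T (r 0)) + T (r 0) + r 0 = 0 := by
    have := key 0
    simpa using this
  have T3 : ∀ x : E3, T (T (T x)) = x := fun x => by
    have := key x; rw [hC, add_zero] at this; exact this
  -- T preserves the lattice
  have hTf : ∀ x, T x = f x - f 0 := fun x => by rw [hT, hfr, hfr]; abel
  have hTlat : ∀ x ∈ latt, T x ∈ latt := by
    intro x hx
    rw [hTf]
    exact latt_sub ((hl x).1 hx) ((hl 0).1 zero_mem_latt)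
  -- column classification
  have hcolumn : ∀ i : Fin 3, ∃ j : Fin 3, ∃ ε : ℝ, (ε = 1 ∨ ε = -1) ∧
      ∀ k, T (EuclideanSpace.single i 1) k = if k = j then ε else 0 := by
    intro i
    set u : E3 := T (EuclideanSpace.single i 1) with hu
    have hul : u ∈ latt := hTlat _ (single_mem_latt i)
    choose a haa using hul
    have hnorm : ‖u‖ = 1 := by
      rw [hu, T.norm_map, EuclideanSpace.norm_single, norm_one]
    have hsum : (a 0)^2 + (a 1)^2 + (a 2)^2 = 1 := by
      have h1 : Real.sqrt (‖u 0‖^2 + ‖u 1‖^2 + ‖u 2‖^2) = 1 := by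
        rw [← Fin.sum_univ_three fun i => ‖u i‖^2, ← EuclideanSpace.norm_eq]
        exact hnorm
      have h2 : ‖u 0‖^2 + ‖u 1‖^2 + ‖u 2‖^2 = 1 := by
        have hnn : (0:ℝ) ≤ ‖u 0‖^2 + ‖u 1‖^2 + ‖u 2‖^2 := by positivity
        nlinarith [Real.sq_sqrt hnn]
      rw [haa 0, haa 1, haa 2] at h2
      simp only [Real.norm_eq_abs, sq_abs] at h2
      exact_mod_cast h2
    have hcover : ∀ k, u k = (a k : ℝ) := haa
    rcases sq3_int _ _ _ hsum with ⟨h0, h1, h2⟩ | ⟨h0, h2, h1⟩ | ⟨h1, h2, h0⟩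
    · refine ⟨2, (a 2 : ℝ), by rcases h2 with h | h <;> [left; right] <;> rw [h] <;> norm_num, ?_⟩
      intro k
      fin_cases k <;> simp [hcover, h0, h1]
    · refine ⟨1, (a 1 : ℝ), by rcases h1 with h | h <;> [left; right] <;> rw [h] <;> norm_num, ?_⟩
      intro k
      fin_cases k <;> simp [hcover, h0, h2]
    · refine ⟨0, (a 0 : ℝ), by rcases h0 with h | h <;> [left; right] <;> rw [h] <;> norm_num, ?_⟩
      intro k
      fin_cases k <;> simp [hcover, h1, h2]
  choose σ ε hε hcol using hcolumn
  have hcol' : ∀ i, T (EuclideanSpace.single i 1) = ε i • EuclideanSpace.single (σ i) 1 := by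
    intro i
    ext k
    rw [hcol i k]
    simp only [PiLp.smul_apply, smul_eq_mul]
    rw [EuclideanSpace.single_apply]
    split <;> simp
  have hεzero : ∀ i, ε i ≠ 0 := by
    intro i; rcases hε i with h | h <;> rw [h] <;> norm_num
  -- σ³ = id and sign products
  have hs3 : ∀ i, σ (σ (σ i)) = i ∧ ε i * ε (σ i) * ε (σ (σ i)) = 1 := by
    intro i
    have h0 : T (T (T (EuclideanSpace.single i 1))) = EuclideanSpace.single i 1 := T3 _
    rw [hcol' i, map_smul, hcol' (σ i), map_smul, map_smul, hcol' (σ (σ i))] at h0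
    have h1 : (ε i • ε (σ i) • ε (σ (σ i)) • EuclideanSpace.single (σ (σ (σ i))) (1:ℝ)) (σ (σ (σ i)))
        = EuclideanSpace.single i (1:ℝ) (σ (σ (σ i))) := by rw [h0]
    simp only [PiLp.smul_apply, smul_eq_mul, EuclideanSpace.single_apply] at h1
    rw [if_true] at h1
    rcases eq_or_ne (σ (σ (σ i))) i with he | he
    · rw [if_pos he] at h1
      exact ⟨he, by rw [← h1]; ring⟩
    · rw [if_neg he] at h1
      exfalso
      rcases hε i with h | h <;> rcases hε (σ i) with h' | h' <;> rcases hε (σ (σ i)) with h'' | h'' <;>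
        rw [h, h', h''] at h1 <;> norm_num at h1
  have hσ3 : ∀ i, σ (σ (σ i)) = i := fun i => (hs3 i).1
  -- rule out σ = id
  have hσne : ¬ ∀ i, σ i = i := by
    intro hid
    have hε1 : ∀ i, ε i = 1 := by
      intro i
      have := (hs3 i).2
      rw [hid i, hid i] at this
      rcases hε i with h | h
      · exact h
      · rw [h] at this; norm_num at this
    have hTid : ∀ x : E3, T x = x := by
      intro x
      conv_lhs => rw [decomp x]
      rw [map_add, map_add, map_smul, map_smul, map_smul, hcol' 0, hcol' 1, hcol' 2,
        hid 0, hid 1, hid 2, hε1 0, hε1 1, hε1 2, one_smul, one_smul, one_smul]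
      exact (decomp x).symm
    have hr0 : r 0 = 0 := by
      have := hr' p
      rw [hTid p, rp] at this
      have := this.symm
      simpa using this
    have hrid : ∀ x, r x = x := fun x => by rw [hr' x, hTid x, hr0, add_zero]
    have : r = 1 := by
      ext x
      rw [hrid x]
      rfl
    rw [this, orderOf_one] at hord
    norm_num at hord
  -- coordinates of v
  have hTvc : ∀ k, v k = v 0 * (if k = σ 0 then ε 0 else 0) + v 1 * (if k = σ 1 then ε 1 else 0)
      + v 2 * (if k = σ 2 then ε 2 else 0) := by
    intro k
    have h1 : T v = v 0 • T (EuclideanSpace.single 0 1) + v 1 • T (EuclideanSpace.single 1 1)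
        + v 2 • T (EuclideanSpace.single 2 1) := by
      conv_lhs => rw [decomp v]
      rw [map_add, map_add, map_smul, map_smul, map_smul]
    have h2 : v k = (v 0 • T (EuclideanSpace.single 0 1) + v 1 • T (EuclideanSpace.single 1 1)
        + v 2 • T (EuclideanSpace.single 2 1)) k := by rw [← h1, hTv]
    rw [h2]
    simp only [PiLp.add_apply, PiLp.smul_apply, smul_eq_mul, hcol]
  -- v = v₀ (1, ±1, ±1)
  have hmain : v 0 ≠ 0 ∧ (v 1 = v 0 ∨ v 1 = -v 0) ∧ (v 2 = v 0 ∨ v 2 = -v 0) := by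
    have hvz : ¬ (v 0 = 0 ∧ v 1 = 0 ∧ v 2 = 0) := by
      rintro ⟨h0, h1, h2⟩
      apply hv0
      ext k
      fin_cases k <;> simpa [h0, h1, h2]
    rcases perm3 σ hσ3 hσne with ⟨c0, c1, c2⟩ | ⟨c0, c1, c2⟩
    · -- σ : 0↦1↦2↦0 : v1 = ε0 v0, v2 = ε1 v1, v0 = ε2 v2
      have e1 : v 1 = v 0 * ε 0 := by
        have := hTvc 1; rw [c0, c1, c2] at this; simpa using this
      have e2 : v 2 = v 1 * ε 1 := by
        have := hTvc 2; rw [c0, c1, c2] at this; simpa using this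
      have h00 : v 0 ≠ 0 := by
        intro h
        exact hvz ⟨h, by rw [e1, h, zero_mul], by rw [e2, e1, h, zero_mul, zero_mul]⟩
      refine ⟨h00, ?_, ?_⟩
      · rcases hε 0 with h | h <;> rw [e1, h] <;> [left; right] <;> ring
      · rcases hε 0 with h | h <;> rcases hε 1 with h' | h' <;> rw [e2, e1, h, h'] <;>
          [left; right; right; left] <;> ring
    · -- σ : 0↦2↦1↦0 : v2 = ε0 v0, v0 = ε1 v1, v1 = ε2 v2
      have e1 : v 2 = v 0 * ε 0 := by
        have := hTvc 2; rw [c0, c1, c2] at this; simpa using this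
      have e2 : v 0 = v 1 * ε 1 := by
        have := hTvc 0; rw [c0, c1, c2] at this; simpa using this
      have e2' : v 1 = v 0 * ε 1 := by
        rcases hε 1 with h | h <;> rw [h] at e2 ⊢ <;> linarith
      have h00 : v 0 ≠ 0 := by
        intro h
        exact hvz ⟨h, by rw [e2', h, zero_mul], by rw [e1, h, zero_mul]⟩
      refine ⟨h00, ?_, ?_⟩
      · rcases hε 1 with h | h <;> rw [e2', h] <;> [left; right] <;> ring
      · rcases hε 0 with h | h <;> rw [e1, h] <;> [left; right] <;> ring
  obtain ⟨h00, h1or, h2or⟩ := hmain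
  have hv1ne : v 1 ≠ 0 := by rcases h1or with h | h <;> rw [h] <;> simpa using h00
  have hv2ne : v 2 ≠ 0 := by rcases h2or with h | h <;> rw [h] <;> simpa using h00
  have hw1 : w 1 = w 0 ∨ w 1 = -w 0 := by
    rw [hws]
    simp only [PiLp.smul_apply, smul_eq_mul]
    rcases h1or with h | h <;> rw [h] <;> [left; right] <;> ring
  have hw2 : w 2 = w 0 ∨ w 2 = -w 0 := by
    rw [hws]
    simp only [PiLp.smul_apply, smul_eq_mul]
    rcases h2or with h | h <;> rw [h] <;> [left; right] <;> ring
  have hnw : ‖w‖ = Real.sqrt 3 * |w 0| := by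
    have h1 : ‖w‖ = Real.sqrt (‖w 0‖^2 + ‖w 1‖^2 + ‖w 2‖^2) := by
      rw [EuclideanSpace.norm_eq, Fin.sum_univ_three]
    have h2 : ‖w 0‖^2 + ‖w 1‖^2 + ‖w 2‖^2 = 3 * (w 0)^2 := by
      simp only [Real.norm_eq_abs, sq_abs]
      rcases hw1 with h | h <;> rcases hw2 with h' | h' <;> rw [h, h'] <;> ring
    rw [h1, h2, Real.sqrt_mul (by norm_num : (0:ℝ) ≤ 3), Real.sqrt_sq_eq_abs]
  refine ⟨?_, ?_, ?_⟩
  · -- part 1 : point-group element sending v to a multiple of (1,1,1)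
    have hd : ∀ i, (![( 1 : ℝ), v 0 / v 1, v 0 / v 2]) i = 1 ∨
        (![( 1 : ℝ), v 0 / v 1, v 0 / v 2]) i = -1 := by
      intro i
      fin_cases i
      · left; rfl
      · rcases h1or with h | h
        · left; show v 0 / v 1 = 1; rw [h, div_self h00]
        · right; show v 0 / v 1 = -1; rw [h, div_neg, div_self h00]
      · rcases h2or with h | h
        · left; show v 0 / v 2 = 1; rw [h, div_self h00]
        · right; show v 0 / v 2 = -1; rw [h, div_neg, div_self h00]
    refine ⟨signIso _ hd, signIso_latt _ hd, signIso_zero _ hd, v 0, h00, ?_⟩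
    ext k
    fin_cases k
    · show (1:ℝ) * v 0 = (v 0 • vec 1 1 1) 0
      simp [vec]
    · show v 0 / v 1 * v 1 = (v 0 • vec 1 1 1) 1
      rw [div_mul_cancel₀ _ hv1ne]
      simp [vec]
    · show v 0 / v 2 * v 2 = (v 0 • vec 1 1 1) 2
      rw [div_mul_cancel₀ _ hv2ne]
      simp [vec]
  · -- part 2 : ‖w‖ ∈ (√3/3) ℤ
    have h3w : w + w + w ∈ latt := by
      have hf3 : f (f (f 0)) ∈ latt :=
        (hl _).1 ((hl _).1 ((hl _).1 zero_mem_latt))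
      have he : f (f (f 0)) = w + w + w := by
        rw [hfr, hfr, hfr, hcomm, hcomm, hcomm, r3 0]
        abel
      rwa [he] at hf3
    obtain ⟨m, hm⟩ := h3w 0
    have hm' : w 0 + w 0 + w 0 = (m : ℝ) := by rw [← hm]; rfl
    refine ⟨|m|, ?_⟩
    have habs : |(m:ℝ)| = 3 * |w 0| := by
      rw [← hm', show w 0 + w 0 + w 0 = 3 * w 0 by ring, abs_mul]
      norm_num
    rw [hnw, Int.cast_abs, show |w 0| = |(m:ℝ)| / 3 by rw [habs]; ring]
    ring
  · -- part 3 : axis through a lattice point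
    rintro ⟨q, hq, t, hqt⟩
    have hrq : r q = q := by rw [hqt]; exact hax t
    have hfq : f q = q + w := by rw [hfr, hrq]
    have hwlat : w ∈ latt := by
      have h5 : f q - q ∈ latt := latt_sub ((hl q).1 hq) hq
      rwa [hfq, add_sub_cancel_left] at h5
    obtain ⟨m, hm⟩ := hwlat 0
    refine ⟨|m|, ?_⟩
    rw [hnw, hm, Int.cast_abs]
    ring
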